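/- arXiv:0811.1245 — 3 statements merged into one kernel-verified Lean document; each statement's English description precedes it below -/
import Mathlib

section
/- Suppose f : (0,b) → (0,∞) is smooth, satisfies f(0)=0=f(b), f'(0)=1, f'(b)=-1, all even derivatives vanish at 0 and b, f'' ≤ 0 everywhere, f'''(0) < 0, and f'''(b) > 0. Then the scalar curvature R = -2(n-1) f''/f + (n-1)(n-2)(1-(f')²)/f² of the warped product metric dt² + f(t)² ds²_{n-1} is strictly positive on (0,b), provided n ≥ 3 and f''(t) < 0 for t near (but not at) 0 and b. -/
open Set Filter Topology


/-- Suppose `f : (0,b) → (0,∞)` is smooth (up to the boundary), satisfies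
`f(0)=0=f(b)`, `f'(0)=1`, `f'(b)=-1`, all even derivatives vanish at `0` and `b`,
`f'' ≤ 0` everywhere, `f'''(0) < 0`, `f'''(b) > 0`, and `f''(t) < 0` for `t` near
(but not at) `0` and `b`.  Then, provided `n ≥ 3`, the scalar curvature
`R = -2(n-1) f''/f + (n-1)(n-2)(1-(f')²)/f²` of the warped product metric
`dt² + f(t)² ds²_{n-1}` is strictly positive on `(0,b)`. -/
theorem warped_scalar_curvature_positive (n : ℕ) (hn : 3 ≤ n) (b : ℝ) (hb : 0 < b)
    (f : ℝ → ℝ)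
    (hsm : ContDiffOn ℝ (⊤ : ℕ∞) f (Set.Icc 0 b))
    (hpos : ∀ t ∈ Set.Ioo (0 : ℝ) b, 0 < f t)
    (hf0 : f 0 = 0) (hfb : f b = 0)
    (hf'0 : derivWithin f (Set.Icc 0 b) 0 = 1)
    (hf'b : derivWithin f (Set.Icc 0 b) b = -1)
    (heven : ∀ k : ℕ, Even k → iteratedDerivWithin k f (Set.Icc 0 b) 0 = 0 ∧
      iteratedDerivWithin k f (Set.Icc 0 b) b = 0)
    (hconc : ∀ t ∈ Set.Ioo (0 : ℝ) b, deriv (deriv f) t ≤ 0)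
    (hf'''0 : iteratedDerivWithin 3 f (Set.Icc 0 b) 0 < 0)
    (hf'''b : 0 < iteratedDerivWithin 3 f (Set.Icc 0 b) b)
    (hnear : ∃ ε > 0, (∀ t ∈ Set.Ioo (0 : ℝ) ε, deriv (deriv f) t < 0) ∧
      ∀ t ∈ Set.Ioo (b - ε) b, deriv (deriv f) t < 0) :
    ∀ t ∈ Set.Ioo (0 : ℝ) b,
      0 < -2 * ((n : ℝ) - 1) * deriv (deriv f) t / f t +
        ((n : ℝ) - 1) * ((n : ℝ) - 2) * (1 - (deriv f t) ^ 2) / (f t) ^ 2 := by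
  obtain ⟨ε, hε, hn0, hnb⟩ := hnear
  have hIsub : Set.Ioo (0 : ℝ) b ⊆ Set.Icc 0 b := Set.Ioo_subset_Icc_self
  have hDon : DifferentiableOn ℝ f (Set.Icc 0 b) := hsm.differentiableOn (by simp)
  have hsmI : ContDiffOn ℝ (⊤ : ℕ∞) f (Set.Ioo 0 b) := hsm.mono hIsub
  have hderiv : ContDiffOn ℝ (⊤ : ℕ∞) (deriv f) (Set.Ioo 0 b) :=
    ((contDiffOn_infty_iff_deriv_of_isOpen isOpen_Ioo).1 hsmI).2
  have hderivC : ContinuousOn (deriv f) (Set.Ioo 0 b) := hderiv.continuousOn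
  -- antitonicity of deriv f on Ioo 0 b
  have hanti : AntitoneOn (deriv f) (Set.Ioo 0 b) := by
    apply antitoneOn_of_deriv_nonpos (convex_Ioo 0 b) hderivC
    · rw [isOpen_Ioo.interior_eq]
      exact hderiv.differentiableOn (by simp)
    · rw [isOpen_Ioo.interior_eq]; exact hconc
  -- deriv f c ≤ 1 for c in the interior
  have hle1 : ∀ c ∈ Set.Ioo (0 : ℝ) b, deriv f c ≤ 1 := by
    intro c hc
    have hdw : HasDerivWithinAt f 1 (Set.Icc 0 b) 0 := by
      have h := (hDon 0 (Set.left_mem_Icc.2 hb.le)).hasDerivWithinAt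
      rwa [hf'0] at h
    have hsub : Set.Ioo (0 : ℝ) c ⊆ Set.Icc 0 b \ {0} := fun x hx =>
      ⟨⟨hx.1.le, hx.2.le.trans hc.2.le⟩, ne_of_gt hx.1⟩
    have htend : Tendsto (slope f 0) (𝓝[Set.Ioo (0:ℝ) c] 0) (𝓝 1) :=
      (hasDerivWithinAt_iff_tendsto_slope.1 hdw).mono_left (nhdsWithin_mono _ hsub)
    have hne : (𝓝[Set.Ioo (0:ℝ) c] (0:ℝ)).NeBot := left_nhdsWithin_Ioo_neBot hc.1
    refine ge_of_tendsto htend ?_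
    filter_upwards [self_mem_nhdsWithin] with s hs
    obtain ⟨ξ, hξ, hξeq⟩ := exists_deriv_eq_slope f hs.1
      (hsm.continuousOn.mono (Set.Icc_subset_Icc le_rfl (hs.2.le.trans hc.2.le)))
      (hDon.mono (fun x hx => ⟨hx.1.le, hx.2.le.trans (hs.2.le.trans hc.2.le)⟩))
    have hξI : ξ ∈ Set.Ioo (0:ℝ) b := ⟨hξ.1, hξ.2.trans (hs.2.trans hc.2)⟩
    have := hanti hξI hc (hξ.2.trans hs.2).le
    rw [slope_def_field, hf0]
    rw [hf0] at hξeq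
    linarith [hξeq ▸ this]
  -- -1 ≤ deriv f c
  have hgem1 : ∀ c ∈ Set.Ioo (0 : ℝ) b, -1 ≤ deriv f c := by
    intro c hc
    have hdw : HasDerivWithinAt f (-1) (Set.Icc 0 b) b := by
      have h := (hDon b (Set.right_mem_Icc.2 hb.le)).hasDerivWithinAt
      rwa [hf'b] at h
    have hsub : Set.Ioo c b ⊆ Set.Icc 0 b \ {b} := fun x hx =>
      ⟨⟨hc.1.le.trans hx.1.le, hx.2.le⟩, ne_of_lt hx.2⟩
    have htend : Tendsto (slope f b) (𝓝[Set.Ioo c b] b) (𝓝 (-1)) :=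
      (hasDerivWithinAt_iff_tendsto_slope.1 hdw).mono_left (nhdsWithin_mono _ hsub)
    have hne : (𝓝[Set.Ioo c b] b).NeBot := right_nhdsWithin_Ioo_neBot hc.2
    refine le_of_tendsto htend ?_
    filter_upwards [self_mem_nhdsWithin] with s hs
    obtain ⟨ξ, hξ, hξeq⟩ := exists_deriv_eq_slope f hs.2
      (hsm.continuousOn.mono (Set.Icc_subset_Icc (hc.1.le.trans hs.1.le) le_rfl))
      (hDon.mono (fun x hx => ⟨(hc.1.trans (hs.1.trans hx.1)).le, hx.2.le⟩))
    have hξI : ξ ∈ Set.Ioo (0:ℝ) b := ⟨hc.1.trans (hs.1.trans hξ.1), hξ.2⟩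
    have := hanti hc hξI (hs.1.trans hξ.1).le
    rw [slope_comm, slope_def_field, hfb]
    rw [hfb] at hξeq
    linarith [hξeq ▸ this]
  intro t ht
  have hft : 0 < f t := hpos t ht
  -- strict upper bound
  have hlt1 : deriv f t < 1 := by
    set m := min ε t with hm
    have hm0 : 0 < m := lt_min hε ht.1
    have hmt : m ≤ t := min_le_right _ _
    have hmb : m < b := lt_of_le_of_lt hmt ht.2
    have hsubI : Set.Ioo (0:ℝ) m ⊆ Set.Ioo (0:ℝ) b := fun x hx => ⟨hx.1, hx.2.trans hmb⟩
    have hstrict : StrictAntiOn (deriv f) (Set.Ioo (0:ℝ) m) := by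
      apply strictAntiOn_of_deriv_neg (convex_Ioo 0 m) (hderivC.mono hsubI)
      rw [isOpen_Ioo.interior_eq]
      exact fun x hx => hn0 x ⟨hx.1, hx.2.trans_le (min_le_left _ _)⟩
    have hs' : m/3 ∈ Set.Ioo (0:ℝ) m := ⟨by linarith, by linarith⟩
    have hs : m/2 ∈ Set.Ioo (0:ℝ) m := ⟨by linarith, by linarith⟩
    have h1 : deriv f t ≤ deriv f (m/2) := hanti (hsubI hs) ht (by linarith)
    have h2 : deriv f (m/2) < deriv f (m/3) := hstrict hs' hs (by linarith)
    have h3 : deriv f (m/3) ≤ 1 := hle1 _ (hsubI hs')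
    linarith
  -- strict lower bound
  have hgt1 : -1 < deriv f t := by
    set m := min ε (b - t) with hm
    have hm0 : 0 < m := lt_min hε (by linarith [ht.2])
    have hmt : t ≤ b - m := by
      have := min_le_right ε (b - t); linarith
    have hm0b : 0 < b - m := lt_of_lt_of_le ht.1 hmt
    have hsubI : Set.Ioo (b - m) b ⊆ Set.Ioo (0:ℝ) b := fun x hx => ⟨hm0b.trans hx.1, hx.2⟩
    have hstrict : StrictAntiOn (deriv f) (Set.Ioo (b - m) b) := by
      apply strictAntiOn_of_deriv_neg (convex_Ioo _ _) (hderivC.mono hsubI)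
      rw [isOpen_Ioo.interior_eq]
      refine fun x hx => hnb x ⟨?_, hx.2⟩
      have := min_le_left ε (b - t); linarith [hx.1]
    have hs : b - m/2 ∈ Set.Ioo (b - m) b := ⟨by linarith, by linarith⟩
    have hs' : b - m/3 ∈ Set.Ioo (b - m) b := ⟨by linarith, by linarith⟩
    have h1 : deriv f (b - m/2) ≤ deriv f t := hanti ht (hsubI hs) (by linarith)
    have h2 : deriv f (b - m/3) < deriv f (b - m/2) := hstrict hs hs' (by linarith)
    have h3 : -1 ≤ deriv f (b - m/3) := hgem1 _ (hsubI hs')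
    linarith
  have hn3 : (3:ℝ) ≤ (n:ℝ) := by exact_mod_cast hn
  have hsq : (deriv f t) ^ 2 < 1 := by nlinarith
  have h2le : deriv (deriv f) t ≤ 0 := hconc t ht
  have term1 : 0 ≤ -2 * ((n : ℝ) - 1) * deriv (deriv f) t / f t := by
    apply div_nonneg _ hft.le
    nlinarith
  have term2 : 0 < ((n : ℝ) - 1) * ((n : ℝ) - 2) * (1 - (deriv f t) ^ 2) / (f t) ^ 2 := by
    apply div_pos _ (pow_pos hft 2)
    have h1 : (0:ℝ) < (n:ℝ) - 1 := by linarith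
    have h2 : (0:ℝ) < (n:ℝ) - 2 := by linarith
    have h3 : (0:ℝ) < 1 - (deriv f t) ^ 2 := by linarith
    positivity
  linarith
end

section
/- Let C, C' > 0 and R₀ > 0 be constants, let q ≥ 2 be an integer, and fix θ₀ ∈ (0, arcsin(√(R₀/C))). Then there exists r₁ > 0 such that for all θ ∈ [0, θ₀] and all r ∈ (0, r₁], the quantity R₀ · r/sin θ + (q-1) sin θ / r - C r sin θ is strictly positive (interpreted as +∞ when θ = 0). -/
open Real

/-- Let `C, C' > 0` and `R₀ > 0` be constants, let `q ≥ 2` be an integer, and fix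
`θ₀ ∈ (0, arcsin √(R₀/C))`.  Then there exists `r₁ > 0` such that for all
`θ ∈ [0, θ₀]` and all `r ∈ (0, r₁]`, the quantity
`R₀ r/sin θ + (q-1) sin θ/r - C r sin θ` is strictly positive (the case `θ = 0`
is interpreted as `+∞` and so is excluded from the quantification). -/
theorem initial_bending_estimate (C C' R₀ θ₀ : ℝ) (q : ℕ)
    (hC : 0 < C) (hC' : 0 < C') (hR₀ : 0 < R₀) (hq : 2 ≤ q)
    (hθ₀ : θ₀ ∈ Set.Ioo 0 (Real.arcsin (Real.sqrt (R₀ / C)))) :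
    ∃ r₁ > 0, ∀ θ ∈ Set.Icc (0 : ℝ) θ₀, θ ≠ 0 → ∀ r ∈ Set.Ioc (0 : ℝ) r₁,
      0 < R₀ * r / Real.sin θ + ((q : ℝ) - 1) * Real.sin θ / r -
        C * r * Real.sin θ := by
  refine ⟨Real.sqrt (1 / C), Real.sqrt_pos.mpr (by positivity), ?_⟩
  rintro θ ⟨hθ0, hθ1⟩ hθne r ⟨hr0, hr1⟩
  have hθpos : 0 < θ := lt_of_le_of_ne hθ0 (Ne.symm hθne)
  have hθlt : θ < π := by
    have h1 : θ₀ < Real.arcsin (Real.sqrt (R₀ / C)) := hθ₀.2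
    have h2 : Real.arcsin (Real.sqrt (R₀ / C)) ≤ π / 2 := Real.arcsin_le_pi_div_two _
    have : π / 2 < π := by linarith [Real.pi_pos]
    linarith
  have hs : 0 < Real.sin θ := Real.sin_pos_of_pos_of_lt_pi hθpos hθlt
  have hterm1 : 0 < R₀ * r / Real.sin θ := by positivity
  have hr2 : r ^ 2 ≤ 1 / C := by
    have := Real.sq_sqrt (le_of_lt (show (0:ℝ) < 1 / C by positivity))
    calc r ^ 2 ≤ Real.sqrt (1 / C) ^ 2 := by
          apply pow_le_pow_left₀ hr0.le hr1
      _ = 1 / C := this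
  have hq1 : (1 : ℝ) ≤ (q : ℝ) - 1 := by
    have : (2 : ℝ) ≤ (q : ℝ) := by exact_mod_cast hq
    linarith
  have hterm2 : C * r * Real.sin θ ≤ ((q : ℝ) - 1) * Real.sin θ / r := by
    rw [div_eq_mul_inv, ← sub_nonneg]
    have key : C * r ≤ ((q : ℝ) - 1) / r := by
      rw [le_div_iff₀ hr0]
      have : C * r * r = C * r ^ 2 := by ring
      rw [this]
      have h1 : C * r ^ 2 ≤ C * (1 / C) := by
        exact mul_le_mul_of_nonneg_left hr2 hC.le
      have h2 : C * (1 / C) = 1 := by field_simp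
      linarith
    have : ((q : ℝ) - 1) * Real.sin θ * r⁻¹ - C * r * Real.sin θ
        = (((q : ℝ) - 1) / r - C * r) * Real.sin θ := by field_simp
    rw [this]
    exact mul_nonneg (by linarith) hs.le
  linarith
end

section
/- Suppose 0 < r < min{1/√(4C), 1/√(2C')} with C, C' > 0, θ ∈ (0, π/2], and q ≥ 2 an integer. If k < sin θ/(2r), then k(1 + C'r²) < R₀ r/sin θ + (q-1) sin θ/r - C r sin θ for any R₀ ≥ 0. -/
open Real

/-- Suppose `0 < r < min (1/√(4C)) (1/√(2C'))` with `C, C' > 0`, `θ ∈ (0, π/2]`,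
and `q ≥ 2` an integer.  If `k < sin θ / (2r)`, then
`k(1 + C'r²) < R₀ r / sin θ + (q-1) sin θ / r - C r sin θ` for any `R₀ ≥ 0`. -/
theorem curvature_inequality_reduction (C C' R₀ k r θ : ℝ) (q : ℕ)
    (hC : 0 < C) (hC' : 0 < C') (hq : 2 ≤ q)
    (hr0 : 0 < r) (hr : r < min (1 / Real.sqrt (4 * C)) (1 / Real.sqrt (2 * C')))
    (hθ : θ ∈ Set.Ioc (0 : ℝ) (π / 2)) (hR₀ : 0 ≤ R₀)
    (hk : k < Real.sin θ / (2 * r)) :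
    k * (1 + C' * r ^ 2) <
      R₀ * r / Real.sin θ + ((q : ℝ) - 1) * Real.sin θ / r - C * r * Real.sin θ := by
  obtain ⟨hθ0, hθ1⟩ := hθ
  have hs : 0 < Real.sin θ :=
    Real.sin_pos_of_pos_of_lt_pi hθ0 (lt_of_le_of_lt hθ1 (by linarith [Real.pi_pos]))
  have h1 : r < 1 / Real.sqrt (4 * C) := lt_of_lt_of_le hr (min_le_left _ _)
  have h2 : r < 1 / Real.sqrt (2 * C') := lt_of_lt_of_le hr (min_le_right _ _)
  have hs4 : 0 < Real.sqrt (4 * C) := Real.sqrt_pos.mpr (by linarith)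
  have hs2 : 0 < Real.sqrt (2 * C') := Real.sqrt_pos.mpr (by linarith)
  have hC4 : 4 * C * r ^ 2 < 1 := by
    have : r * Real.sqrt (4 * C) < 1 := by
      rw [lt_div_iff₀ hs4] at h1; linarith
    have hsq : Real.sqrt (4 * C) ^ 2 = 4 * C := Real.sq_sqrt (by linarith)
    nlinarith [mul_pos hr0 hs4]
  have hC2 : 2 * C' * r ^ 2 < 1 := by
    have : r * Real.sqrt (2 * C') < 1 := by
      rw [lt_div_iff₀ hs2] at h2; linarith
    have hsq : Real.sqrt (2 * C') ^ 2 = 2 * C' := Real.sq_sqrt (by linarith)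
    nlinarith [mul_pos hr0 hs2]
  have hq1 : (1 : ℝ) ≤ (q : ℝ) - 1 := by
    have : (2 : ℝ) ≤ (q : ℝ) := by exact_mod_cast hq
    linarith
  have hR : 0 ≤ R₀ * r / Real.sin θ := by positivity
  -- k (1 + C' r²) < (3/4) sinθ / r
  have hmid : k * (1 + C' * r ^ 2) < 3 / 4 * (Real.sin θ / r) := by
    have hfac : 1 + C' * r ^ 2 < 3 / 2 := by nlinarith
    have hfac0 : (0:ℝ) < 1 + C' * r ^ 2 := by positivity
    rcases le_or_gt k 0 with hk0 | hk0
    · have : k * (1 + C' * r ^ 2) ≤ 0 := mul_nonpos_of_nonpos_of_nonneg hk0 hfac0.le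
      have : (0:ℝ) < 3 / 4 * (Real.sin θ / r) := by positivity
      linarith
    · calc k * (1 + C' * r ^ 2) < Real.sin θ / (2 * r) * (3 / 2) := by
            apply mul_lt_mul' hk.le hfac hfac0.le
            exact lt_of_lt_of_le hk0 hk.le |>.trans_le le_rfl
          _ = 3 / 4 * (Real.sin θ / r) := by field_simp; ring
  -- RHS ≥ (3/4) sinθ / r
  have hrhs : 3 / 4 * (Real.sin θ / r) ≤
      ((q : ℝ) - 1) * Real.sin θ / r - C * r * Real.sin θ := by
    rw [← sub_nonneg]
    have e : ((q : ℝ) - 1) * Real.sin θ / r - C * r * Real.sin θ -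
        3 / 4 * (Real.sin θ / r) =
        (Real.sin θ / r) * (((q : ℝ) - 1) - C * r ^ 2 - 3 / 4) := by
      field_simp
    rw [e]
    apply mul_nonneg (by positivity)
    nlinarith
  linarith
end
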